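/- Let n ∈ ℕ and k1, k2 ∈ ℝ. The inner product IP : {0,1}^n × {0,1}^n → {0,1}, IP(x,y) = x·y mod 2, is a (k1, k2, 2^{−(1 + k1 + k2 − n)/2}) X1-strong two-source extractor against classical product-type knowledge (with output length m = 1). -/

import Mathlib

open Matrix Kronecker BigOperators Finset ComplexOrder

/-- Bit strings of length `n`. -/
abbrev BS (n : ℕ) := Fin n → Bool

/-- Embedding of a bit into the field with two elements. -/
def toZ2 (b : Bool) : ZMod 2 := if b then 1 else 0

/-- Inner product modulo 2 of two bit strings. -/
def ipBool {n : ℕ} (x y : BS n) : Bool := decide ((∑ i, toZ2 (x i) * toZ2 (y i)) = 1)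

/-- Multiplication of a bit string by a matrix over F₂. -/
def mulVecBool {n : ℕ} (L : Matrix (Fin n) (Fin n) (ZMod 2)) (x : BS n) : BS n :=
  fun i => decide ((L.mulVec fun j => toZ2 (x j)) i = 1)

/-- The `deor` extractor associated to a family of matrices over F₂. -/
def deor {n m : ℕ} (A : Fin m → Matrix (Fin n) (Fin n) (ZMod 2)) (x y : BS n) : BS m :=
  fun i => ipBool (mulVecBool (A i) x) y

/-- Trace norm of a complex matrix: `tr √(SᴴS)`. -/
noncomputable def traceNorm {B : Type*} [Fintype B] [DecidableEq B] (S : Matrix B B ℂ) : ℝ :=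
  (((Matrix.posSemidef_conjTranspose_mul_self S).1.eigenvectorUnitary : Matrix B B ℂ) *
    Matrix.diagonal (((↑) : ℝ → ℂ) ∘ Real.sqrt ∘ (Matrix.posSemidef_conjTranspose_mul_self S).1.eigenvalues) *
    (star (Matrix.posSemidef_conjTranspose_mul_self S).1.eigenvectorUnitary : Matrix B B ℂ)).trace.re

/-- Trace distance between two matrices. -/
noncomputable def traceDist {B : Type*} [Fintype B] [DecidableEq B] (ρ σ : Matrix B B ℂ) : ℝ :=
  (1/2) * traceNorm (ρ - σ)

/-- A density matrix: positive semidefinite with unit trace. -/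
def IsDensity {B : Type*} [Fintype B] (ρ : Matrix B B ℂ) : Prop :=
  ρ.PosSemidef ∧ ρ.trace = 1

/-- A cq-state given by its family of (subnormalized) conditional operators. -/
def IsCQ {X B : Type*} [Fintype X] [Fintype B] (ρ : X → Matrix B B ℂ) : Prop :=
  (∀ x, (ρ x).PosSemidef) ∧ (∑ x, (ρ x).trace) = 1

/-- The full matrix `Σ_x |x⟩⟨x| ⊗ ρ_{B∧x}` of a cq-state. -/
noncomputable def cqMatrix {X B : Type*} [Fintype X] [DecidableEq X] [Fintype B]
    (ρ : X → Matrix B B ℂ) : Matrix (X × B) (X × B) ℂ :=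
  ∑ x, (Matrix.single x x (1:ℂ)) ⊗ₖ ρ x

/-- Conditional min-entropy of a cq-state: the sup over density matrices σ and reals w with
`ρ_{B∧x} ≤ 2^{-w}·σ` for all `x` (Loewner order), of `w`; `⊥ = -∞` if no such pair exists. -/
noncomputable def qCondHmin {X B : Type*} [Fintype X] [Fintype B]
    (ρ : X → Matrix B B ℂ) : EReal :=
  sSup {z : EReal | ∃ w : ℝ, z = (w : EReal) ∧ ∃ σ : Matrix B B ℂ, σ.PosSemidef ∧ σ.trace = 1 ∧
    ∀ x, (((2:ℝ) ^ (-w)) • σ - ρ x).PosSemidef}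

/-- The maximally mixed state on `m` qubits. -/
noncomputable def mixed (m : ℕ) : Matrix (BS m) (BS m) ℂ := ((2:ℂ)^m)⁻¹ • 1

/-- A finitely supported probability distribution. -/
def IsDist {α : Type*} [Fintype α] (P : α → ℝ) : Prop := (∀ a, 0 ≤ P a) ∧ ∑ a, P a = 1

/-- Total variation distance. -/
noncomputable def TV {α : Type*} [Fintype α] (Q R : α → ℝ) : ℝ := (1/2) * ∑ a, |Q a - R a|

/-- Min-entropy of a distribution. -/
noncomputable def Hmin {X : Type*} [Fintype X] [Nonempty X] (P : X → ℝ) : ℝ :=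
  - Real.logb 2 (⨆ x, P x)

/-- Conditional min-entropy of a joint distribution. -/
noncomputable def HminCond {X Z : Type*} [Fintype X] [Nonempty X] [Fintype Z]
    (P : X → Z → ℝ) : ℝ :=
  - Real.logb 2 (∑ z, ⨆ x, P x z)

/-- `(k1,k2,ε)` X1-strong two-source extractor (no side information). -/
def IsStrongExt (n1 n2 m : ℕ) (Ext : BS n1 → BS n2 → BS m) (k1 k2 ε : ℝ) : Prop :=
  ∀ (P1 : BS n1 → ℝ) (P2 : BS n2 → ℝ), IsDist P1 → IsDist P2 →
    k1 ≤ Hmin P1 → k2 ≤ Hmin P2 →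
    TV (fun p : BS m × BS n1 => ∑ x2, if Ext p.2 x2 = p.1 then P1 p.2 * P2 x2 else 0)
       (fun p : BS m × BS n1 => ((2:ℝ)^m)⁻¹ * P1 p.2) ≤ ε

/-- `(k1,k2,ε)` X1-strong two-source extractor against classical product-type knowledge. -/
def IsStrongExtCPT (n1 n2 m : ℕ) (Ext : BS n1 → BS n2 → BS m) (k1 k2 ε : ℝ) : Prop :=
  ∀ (Z1 Z2 : Type) [Fintype Z1] [Fintype Z2],
    ∀ (P1 : BS n1 → Z1 → ℝ) (P2 : BS n2 → Z2 → ℝ),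
    IsDist (fun p : BS n1 × Z1 => P1 p.1 p.2) →
    IsDist (fun p : BS n2 × Z2 => P2 p.1 p.2) →
    k1 ≤ HminCond P1 → k2 ≤ HminCond P2 →
    TV (fun q : BS m × BS n1 × Z1 × Z2 =>
          ∑ x2, if Ext q.2.1 x2 = q.1 then P1 q.2.1 q.2.2.1 * P2 x2 q.2.2.2 else 0)
       (fun q : BS m × BS n1 × Z1 × Z2 =>
          ((2:ℝ)^m)⁻¹ * P1 q.2.1 q.2.2.1 * ∑ x2, P2 x2 q.2.2.2) ≤ ε

/-- `(k1,k2,ε)` weak two-source extractor against classical product-type knowledge. -/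
def IsWeakExtCPT (n1 n2 m : ℕ) (Ext : BS n1 → BS n2 → BS m) (k1 k2 ε : ℝ) : Prop :=
  ∀ (Z1 Z2 : Type) [Fintype Z1] [Fintype Z2],
    ∀ (P1 : BS n1 → Z1 → ℝ) (P2 : BS n2 → Z2 → ℝ),
    IsDist (fun p : BS n1 × Z1 => P1 p.1 p.2) →
    IsDist (fun p : BS n2 × Z2 => P2 p.1 p.2) →
    k1 ≤ HminCond P1 → k2 ≤ HminCond P2 →
    TV (fun q : BS m × Z1 × Z2 =>
          ∑ x1, ∑ x2, if Ext x1 x2 = q.1 then P1 x1 q.2.1 * P2 x2 q.2.2 else 0)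
       (fun q : BS m × Z1 × Z2 =>
          ((2:ℝ)^m)⁻¹ * (∑ x1, P1 x1 q.2.1) * ∑ x2, P2 x2 q.2.2) ≤ ε

/-- `(k1,k2,ε)` X1-strong two-source extractor against classical knowledge in the Markov model. -/
def IsStrongExtCMarkov (n1 n2 m : ℕ) (Ext : BS n1 → BS n2 → BS m) (k1 k2 ε : ℝ) : Prop :=
  ∀ (C : Type) [Fintype C], ∀ (P : BS n1 → BS n2 → C → ℝ),
    IsDist (fun q : BS n1 × BS n2 × C => P q.1 q.2.1 q.2.2) →
    (∀ x1 x2 c, P x1 x2 c * (∑ x1', ∑ x2', P x1' x2' c)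
        = (∑ x2', P x1 x2' c) * (∑ x1', P x1' x2 c)) →
    k1 ≤ HminCond (fun x1 c => ∑ x2, P x1 x2 c) →
    k2 ≤ HminCond (fun x2 c => ∑ x1, P x1 x2 c) →
    TV (fun q : BS m × BS n1 × C => ∑ x2, if Ext q.2.1 x2 = q.1 then P q.2.1 x2 q.2.2 else 0)
       (fun q : BS m × BS n1 × C => ((2:ℝ)^m)⁻¹ * ∑ x2, P q.2.1 x2 q.2.2) ≤ ε

/-- The output cq-state `ρ_{Ext(X1,X2) X1 C1 C2}` for product-type quantum side information. -/
noncomputable def qStrongOut {n1 n2 m : ℕ} {C1 C2 : Type}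
    [Fintype C1] [Fintype C2]
    (Ext : BS n1 → BS n2 → BS m)
    (ρ1 : BS n1 → Matrix C1 C1 ℂ) (ρ2 : BS n2 → Matrix C2 C2 ℂ) :
    Matrix (BS m × (BS n1 × C1) × C2) (BS m × (BS n1 × C1) × C2) ℂ :=
  ∑ x1, ∑ x2, (Matrix.single (Ext x1 x2) (Ext x1 x2) (1:ℂ)) ⊗ₖ
    (((Matrix.single x1 x1 (1:ℂ)) ⊗ₖ ρ1 x1) ⊗ₖ ρ2 x2)

/-- `(k1,k2,ε)` X1-strong two-source extractor against quantum product-type knowledge. -/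
def IsStrongExtQPT (n1 n2 m : ℕ) (Ext : BS n1 → BS n2 → BS m) (k1 k2 ε : ℝ) : Prop :=
  ∀ (C1 C2 : Type) [Fintype C1] [DecidableEq C1] [Fintype C2] [DecidableEq C2],
    ∀ (ρ1 : BS n1 → Matrix C1 C1 ℂ) (ρ2 : BS n2 → Matrix C2 C2 ℂ),
    IsCQ ρ1 → IsCQ ρ2 →
    (k1 : EReal) ≤ qCondHmin ρ1 → (k2 : EReal) ≤ qCondHmin ρ2 →
    traceDist (qStrongOut Ext ρ1 ρ2) (mixed m ⊗ₖ (cqMatrix ρ1 ⊗ₖ ∑ x2, ρ2 x2)) ≤ ε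

/-- `(k1,k2,ε)` weak two-source extractor against quantum product-type knowledge. -/
def IsWeakExtQPT (n1 n2 m : ℕ) (Ext : BS n1 → BS n2 → BS m) (k1 k2 ε : ℝ) : Prop :=
  ∀ (C1 C2 : Type) [Fintype C1] [DecidableEq C1] [Fintype C2] [DecidableEq C2],
    ∀ (ρ1 : BS n1 → Matrix C1 C1 ℂ) (ρ2 : BS n2 → Matrix C2 C2 ℂ),
    IsCQ ρ1 → IsCQ ρ2 →
    (k1 : EReal) ≤ qCondHmin ρ1 → (k2 : EReal) ≤ qCondHmin ρ2 →
    traceDist (∑ x1, ∑ x2, (Matrix.single (Ext x1 x2) (Ext x1 x2) (1:ℂ)) ⊗ₖ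
        ((ρ1 x1) ⊗ₖ ρ2 x2))
      (mixed m ⊗ₖ ((∑ x1, ρ1 x1) ⊗ₖ ∑ x2, ρ2 x2)) ≤ ε

/-- `(k1,k2,ε)` X1-strong two-source extractor against quantum knowledge in the Markov model,
in decomposed form. -/
def IsStrongExtQMarkov (n1 n2 m : ℕ) (Ext : BS n1 → BS n2 → BS m) (k1 k2 ε : ℝ) : Prop :=
  ∀ (Z C1 C2 : Type) [Fintype Z] [DecidableEq Z]
      [Fintype C1] [DecidableEq C1] [Fintype C2] [DecidableEq C2],
    ∀ (P : Z → ℝ) (ρ1 : Z → BS n1 → Matrix C1 C1 ℂ) (ρ2 : Z → BS n2 → Matrix C2 C2 ℂ),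
    IsDist P → (∀ z, IsCQ (ρ1 z)) → (∀ z, IsCQ (ρ2 z)) →
    (k1 : EReal) ≤ qCondHmin (fun x1 : BS n1 =>
      ∑ z, P z • (((ρ1 z x1) ⊗ₖ ∑ x2, ρ2 z x2) ⊗ₖ Matrix.single z z (1:ℂ))) →
    (k2 : EReal) ≤ qCondHmin (fun x2 : BS n2 =>
      ∑ z, P z • (((∑ x1, ρ1 z x1) ⊗ₖ ρ2 z x2) ⊗ₖ Matrix.single z z (1:ℂ))) →
    traceDist
      (∑ x1, ∑ x2, ∑ z, P z •
        ((Matrix.single (Ext x1 x2) (Ext x1 x2) (1:ℂ)) ⊗ₖ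
          ((Matrix.single x1 x1 (1:ℂ)) ⊗ₖ
            (((ρ1 z x1) ⊗ₖ ρ2 z x2) ⊗ₖ Matrix.single z z (1:ℂ)))))
      (mixed m ⊗ₖ cqMatrix (fun x1 : BS n1 =>
        ∑ z, P z • (((ρ1 z x1) ⊗ₖ ∑ x2, ρ2 z x2) ⊗ₖ Matrix.single z z (1:ℂ))))
      ≤ ε

namespace S18

def ch (a : ZMod 2) : ℝ := if a = 1 then -1 else 1

def ipZ {n : ℕ} (x y : BS n) : ZMod 2 := ∑ i, toZ2 (x i) * toZ2 (y i)

lemma ch_add (a b : ZMod 2) : ch (a + b) = ch a * ch b := by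
  rcases (by decide : ∀ c : ZMod 2, c = 0 ∨ c = 1) a with rfl | rfl <;> rcases (by decide : ∀ c : ZMod 2, c = 0 ∨ c = 1) b with rfl | rfl <;> simp (config := {decide := true}) [ch]

lemma toZ2_xor (a b : Bool) : toZ2 (xor a b) = toZ2 a + toZ2 b := by
  cases a <;> cases b <;> decide

lemma toZ2_not (a : Bool) : toZ2 (!a) = toZ2 a + 1 := by cases a <;> decide

lemma ipZ_comm {n : ℕ} (x y : BS n) : ipZ x y = ipZ y x := by
  unfold ipZ; exact Finset.sum_congr rfl fun i _ => mul_comm _ _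

lemma ipBool_eq {n : ℕ} (x y : BS n) : ipBool x y = decide (ipZ x y = 1) := rfl

def bxor {n : ℕ} (x y : BS n) : BS n := fun i => xor (x i) (y i)

lemma ipZ_bxor {n : ℕ} (x y y' : BS n) : ipZ x (bxor y y') = ipZ x y + ipZ x y' := by
  unfold ipZ bxor
  rw [← Finset.sum_add_distrib]
  exact Finset.sum_congr rfl fun i _ => by rw [toZ2_xor, mul_add]

lemma ipZ_zero {n : ℕ} (x : BS n) : ipZ x (fun _ => false) = 0 := by
  simp [ipZ, toZ2]

lemma sum_ch_zero {n : ℕ} (y : BS n) (hy : y ≠ fun _ => false) :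
    ∑ x : BS n, ch (ipZ x y) = 0 := by
  have : ∃ i, y i = true := by
    by_contra h
    push_neg at h
    exact hy (funext fun i => by simpa using h i)
  obtain ⟨i, hi⟩ := this
  set σ : BS n → BS n := fun x => Function.update x i (!x i) with hσ
  have hinv : Function.Involutive σ := by
    intro x
    funext j
    by_cases hj : j = i
    · subst hj; simp [σ, Function.update]
    · simp [σ, Function.update, hj]
  have hb : Function.Bijective σ := hinv.bijective
  have hflip : ∀ x : BS n, ipZ (σ x) y = ipZ x y + 1 := by
    intro x
    unfold ipZ
    have : ∀ j, toZ2 (σ x j) * toZ2 (y j)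
        = toZ2 (x j) * toZ2 (y j) + (if j = i then 1 else 0) := by
      intro j
      by_cases hj : j = i
      · subst hj
        have hs : σ x j = !x j := by simp [σ]
        rw [hs, hi, toZ2_not]
        simp [toZ2, add_mul]
      · simp [σ, Function.update, hj]
    rw [Finset.sum_congr rfl fun j _ => this j, Finset.sum_add_distrib]
    simp
  have h1 : ∑ x : BS n, ch (ipZ x y) = ∑ x : BS n, ch (ipZ (σ x) y) :=
    (Function.Bijective.sum_comp hb _).symm
  have h2 : ∑ x : BS n, ch (ipZ (σ x) y) = - ∑ x : BS n, ch (ipZ x y) := by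
    rw [← Finset.sum_neg_distrib]
    refine Finset.sum_congr rfl fun x _ => ?_
    rw [hflip, ch_add]
    simp [ch]
  have := h1.trans h2
  linarith

lemma sum_ch_eq {n : ℕ} (y y' : BS n) :
    ∑ x : BS n, ch (ipZ x y) * ch (ipZ x y') = if y = y' then (2:ℝ)^n else 0 := by
  have hc : ∀ x : BS n, ch (ipZ x y) * ch (ipZ x y') = ch (ipZ x (bxor y y')) := by
    intro x; rw [ipZ_bxor, ch_add]
  rw [Finset.sum_congr rfl fun x _ => hc x]
  by_cases h : y = y'
  · subst h
    have : bxor y y = fun _ => false := funext fun i => by simp [bxor]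
    rw [this, if_pos rfl]
    have h0 : ∀ x : BS n, ch (ipZ x (fun _ => false)) = 1 := fun x => by
      rw [ipZ_zero]; simp [ch]
    rw [Finset.sum_congr rfl fun x _ => h0 x]
    simp only [Finset.sum_const, Finset.card_univ, nsmul_eq_mul, mul_one]
    norm_num [Fintype.card_fun]
  · rw [if_neg h]
    apply sum_ch_zero
    intro hc2
    apply h
    funext i
    have h3 := congrFun hc2 i
    simp only [bxor] at h3
    revert h3
    cases y i <;> cases y' i <;> simp

lemma parseval {n : ℕ} (q : BS n → ℝ) :
    ∑ x : BS n, (∑ y, ch (ipZ x y) * q y)^2 = 2^n * ∑ y, (q y)^2 := by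
  have : ∀ x : BS n, (∑ y, ch (ipZ x y) * q y)^2
      = ∑ y, ∑ y', (ch (ipZ x y) * ch (ipZ x y')) * (q y * q y') := by
    intro x
    rw [sq, Finset.sum_mul_sum]
    exact Finset.sum_congr rfl fun y _ => Finset.sum_congr rfl fun y' _ => by ring
  rw [Finset.sum_congr rfl fun x _ => this x]
  rw [Finset.sum_comm]
  have : ∀ y : BS n, ∑ x : BS n, ∑ y', (ch (ipZ x y) * ch (ipZ x y')) * (q y * q y')
      = ∑ y', (if y = y' then (2:ℝ)^n else 0) * (q y * q y') := by
    intro y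
    rw [Finset.sum_comm]
    refine Finset.sum_congr rfl fun y' _ => ?_
    rw [← Finset.sum_mul, sum_ch_eq]
  rw [Finset.sum_congr rfl fun y _ => this y]
  rw [Finset.mul_sum]
  refine Finset.sum_congr rfl fun y _ => ?_
  simp [sq]

lemma cs {α : Type*} [Fintype α] (f g : α → ℝ) (hf : ∀ a, 0 ≤ f a) (hg : ∀ a, 0 ≤ g a) :
    ∑ a, f a * g a ≤ Real.sqrt (∑ a, (f a)^2) * Real.sqrt (∑ a, (g a)^2) := by
  have h := Finset.sum_mul_sq_le_sq_mul_sq Finset.univ f g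
  have hnn : (0:ℝ) ≤ ∑ a, f a * g a :=
    Finset.sum_nonneg fun a _ => mul_nonneg (hf a) (hg a)
  calc ∑ a, f a * g a = Real.sqrt ((∑ a, f a * g a)^2) := (Real.sqrt_sq hnn).symm
    _ ≤ Real.sqrt ((∑ a, (f a)^2) * ∑ a, (g a)^2) := Real.sqrt_le_sqrt h
    _ = _ := Real.sqrt_mul (Finset.sum_nonneg fun a _ => sq_nonneg _) _

end S18


lemma S18.ch_ipZ {n : ℕ} (x y : BS n) :
    S18.ch (S18.ipZ x y) = if ipBool x y then (-1:ℝ) else 1 := by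
  unfold S18.ch S18.ipZ ipBool
  by_cases h : (∑ i, toZ2 (x i) * toZ2 (y i)) = 1 <;> simp [h]

lemma S18.sum_const_mul {α : Type*} [Fintype α] (c : ℝ) (f : α → ℝ) :
    ∑ a, c * f a = c * ∑ a, f a := by rw [Finset.mul_sum]

lemma S18.hmin_bound {X Z : Type*} [Fintype X] [Nonempty X] [Fintype Z]
    (P : X → Z → ℝ) (k : ℝ)
    (hsum : ∑ x, ∑ z, P x z = 1) (hub : ∀ (x : X) (z : Z), P x z ≤ ⨆ x', P x' z)
    (hk : k ≤ HminCond P) :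
    ∑ z, ⨆ x, P x z ≤ (2:ℝ) ^ (-k) := by
  set S := ∑ z, ⨆ x, P x z with hS
  have hSpos : 0 < S := by
    have h1 : (1:ℝ) ≤ ∑ _x : X, S := by
      rw [← hsum]
      exact Finset.sum_le_sum fun x _ => Finset.sum_le_sum fun z _ => hub x z
    by_contra h
    push_neg at h
    have h2 : ∑ _x : X, S ≤ 0 := Finset.sum_nonpos fun x _ => h
    linarith
  have hlog : Real.logb 2 S ≤ -k := by
    have h3 : k ≤ - Real.logb 2 S := hk
    linarith
  calc S = (2:ℝ) ^ (Real.logb 2 S) := (Real.rpow_logb (by norm_num) (by norm_num) hSpos).symm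
    _ ≤ (2:ℝ) ^ (-k) := Real.rpow_le_rpow_of_exponent_le one_le_two hlog

theorem stmt18 (n : ℕ) (k1 k2 : ℝ) :
    IsStrongExtCPT n n 1 (fun x y => fun _ => ipBool x y) k1 k2
      ((2:ℝ) ^ (-(1 + k1 + k2 - (n:ℝ))/2)) := by
  intro Z1 Z2 _ _ P1 P2 h1 h2 hk1 hk2
  classical
  have h1n : ∀ x z, 0 ≤ P1 x z := fun x z => h1.1 (x, z)
  have h2n : ∀ x z, 0 ≤ P2 x z := fun x z => h2.1 (x, z)
  have h1s : ∑ x, ∑ z, P1 x z = 1 := by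
    have h := h1.2
    rwa [Fintype.sum_prod_type] at h
  have h2s : ∑ x, ∑ z, P2 x z = 1 := by
    have h := h2.2
    rwa [Fintype.sum_prod_type] at h
  have h1s' : ∑ z, ∑ x, P1 x z = 1 := by rw [Finset.sum_comm]; exact h1s
  have h2s' : ∑ z, ∑ x, P2 x z = 1 := by rw [Finset.sum_comm]; exact h2s
  set B : BS n → Z2 → ℝ := fun x1 z2 => ∑ x2, S18.ch (S18.ipZ x1 x2) * P2 x2 z2 with hBdef
  set M1 : Z1 → ℝ := fun z => ⨆ x, P1 x z with hM1def
  set M2 : Z2 → ℝ := fun z => ⨆ x, P2 x z with hM2def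
  have hub1 : ∀ x z, P1 x z ≤ M1 z := by
    intro x z
    simp only [hM1def]
    exact le_ciSup (f := fun x' => P1 x' z) (Set.Finite.bddAbove (Set.finite_range _)) x
  have hub2 : ∀ x z, P2 x z ≤ M2 z := by
    intro x z
    simp only [hM2def]
    exact le_ciSup (f := fun x' => P2 x' z) (Set.Finite.bddAbove (Set.finite_range _)) x
  have hM1n : ∀ z, 0 ≤ M1 z := fun z =>
    le_trans (h1n (Classical.arbitrary _) z) (hub1 _ z)
  have hM2n : ∀ z, 0 ≤ M2 z := fun z =>
    le_trans (h2n (Classical.arbitrary _) z) (hub2 _ z)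
  have hub1' : ∀ (x : BS n) (z : Z1), P1 x z ≤ ⨆ x', P1 x' z := by
    simpa only [hM1def] using hub1
  have hub2' : ∀ (x : BS n) (z : Z2), P2 x z ≤ ⨆ x', P2 x' z := by
    simpa only [hM2def] using hub2
  have hM1s : ∑ z, M1 z ≤ (2:ℝ) ^ (-k1) := by
    simp only [hM1def]
    exact S18.hmin_bound P1 k1 h1s hub1' hk1
  have hM2s : ∑ z, M2 z ≤ (2:ℝ) ^ (-k2) := by
    simp only [hM2def]
    exact S18.hmin_bound P2 k2 h2s hub2' hk2
  have key : ∀ (v : BS 1) (x1 : BS n) (z1 : Z1) (z2 : Z2),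
      (∑ x2, if (fun _ : Fin 1 => ipBool x1 x2) = v then P1 x1 z1 * P2 x2 z2 else 0)
        - ((2:ℝ)^(1:ℕ))⁻¹ * P1 x1 z1 * ∑ x2, P2 x2 z2
      = (if v 0 then (-1:ℝ) else 1) * ((1/2) * (P1 x1 z1 * B x1 z2)) := by
    intro v x1 z1 z2
    have hterm : ∀ x2 : BS n,
        (if (fun _ : Fin 1 => ipBool x1 x2) = v then P1 x1 z1 * P2 x2 z2 else 0)
        = (1/2) * (P1 x1 z1 * P2 x2 z2)
          + ((if v 0 then (-1:ℝ) else 1) * ((1/2) * P1 x1 z1))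
            * (S18.ch (S18.ipZ x1 x2) * P2 x2 z2) := by
      intro x2
      have hcond : ((fun _ : Fin 1 => ipBool x1 x2) = v) ↔ ipBool x1 x2 = v 0 :=
        ⟨fun h => congrFun h 0, fun h => funext fun i => by rw [Subsingleton.elim i 0]; exact h⟩
      rw [S18.ch_ipZ]
      simp only [hcond]
      cases hv : v 0 <;> cases hd : ipBool x1 x2 <;> simp [hv, hd] <;> ring
    rw [Finset.sum_congr rfl fun x2 _ => hterm x2, Finset.sum_add_distrib,
      S18.sum_const_mul, S18.sum_const_mul, S18.sum_const_mul]
    simp only [hBdef]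
    rw [pow_one]
    ring
  have habs : ∀ (v : BS 1) (x1 : BS n) (z1 : Z1) (z2 : Z2),
      |(∑ x2, if (fun _ : Fin 1 => ipBool x1 x2) = v then P1 x1 z1 * P2 x2 z2 else 0)
        - ((2:ℝ)^(1:ℕ))⁻¹ * P1 x1 z1 * ∑ x2, P2 x2 z2|
      = (1/2) * (P1 x1 z1 * |B x1 z2|) := by
    intro v x1 z1 z2
    rw [key v x1 z1 z2, abs_mul, abs_mul, abs_mul, abs_of_nonneg (h1n x1 z1)]
    have hs : |if v 0 then (-1:ℝ) else 1| = 1 := by cases v 0 <;> simp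
    rw [hs, abs_of_pos (by norm_num : (0:ℝ) < 1/2)]
    ring
  have hcard : Fintype.card (BS 1) = 2 := by
    simp [BS, Fintype.card_fun]
  have hre : ∑ x1 : BS n, ∑ z1 : Z1, ∑ z2 : Z2, P1 x1 z1 * |B x1 z2|
      = ∑ z1, ∑ z2, ∑ x1, P1 x1 z1 * |B x1 z2| := by
    rw [Finset.sum_comm]
    exact Finset.sum_congr rfl fun z1 _ => Finset.sum_comm
  -- inner Cauchy-Schwarz bound
  have hin : ∀ (z1 : Z1) (z2 : Z2), ∑ x1, P1 x1 z1 * |B x1 z2|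
      ≤ Real.sqrt (M1 z1 * ∑ x, P1 x z1)
        * (Real.sqrt ((2:ℝ)^n) * Real.sqrt (M2 z2 * ∑ x, P2 x z2)) := by
    intro z1 z2
    refine le_trans (S18.cs (fun x1 => P1 x1 z1) (fun x1 => |B x1 z2|)
      (fun x1 => h1n x1 z1) (fun x1 => abs_nonneg _)) ?_
    have hA : ∑ x1, (P1 x1 z1)^2 ≤ M1 z1 * ∑ x, P1 x z1 := by
      rw [Finset.mul_sum]
      refine Finset.sum_le_sum fun x _ => ?_
      rw [sq]
      exact mul_le_mul_of_nonneg_right (hub1 x z1) (h1n x z1)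
    have hBsq : ∑ x1, (|B x1 z2|)^2 = (2:ℝ)^n * ∑ x2, (P2 x2 z2)^2 := by
      simp only [sq_abs, hBdef]
      exact S18.parseval (fun x2 => P2 x2 z2)
    have hC : (2:ℝ)^n * ∑ x2, (P2 x2 z2)^2 ≤ (2:ℝ)^n * (M2 z2 * ∑ x, P2 x z2) := by
      refine mul_le_mul_of_nonneg_left ?_ (by positivity)
      rw [Finset.mul_sum]
      refine Finset.sum_le_sum fun x _ => ?_
      rw [sq]
      exact mul_le_mul_of_nonneg_right (hub2 x z2) (h2n x z2)
    have h1' : Real.sqrt (∑ x1, (P1 x1 z1)^2) ≤ Real.sqrt (M1 z1 * ∑ x, P1 x z1) :=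
      Real.sqrt_le_sqrt hA
    have h2' : Real.sqrt (∑ x1, |B x1 z2|^2)
        ≤ Real.sqrt ((2:ℝ)^n) * Real.sqrt (M2 z2 * ∑ x, P2 x z2) := by
      calc Real.sqrt (∑ x1, |B x1 z2|^2)
          = Real.sqrt ((2:ℝ)^n * ∑ x2, (P2 x2 z2)^2) := by rw [hBsq]
        _ ≤ Real.sqrt ((2:ℝ)^n * (M2 z2 * ∑ x, P2 x z2)) := Real.sqrt_le_sqrt hC
        _ = _ := Real.sqrt_mul (by positivity) _
    exact mul_le_mul h1' h2' (Real.sqrt_nonneg _) (Real.sqrt_nonneg _)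
  have hstep : ∑ z1, ∑ z2, ∑ x1, P1 x1 z1 * |B x1 z2|
      ≤ (∑ z1, Real.sqrt (M1 z1 * ∑ x, P1 x z1))
        * (Real.sqrt ((2:ℝ)^n) * ∑ z2, Real.sqrt (M2 z2 * ∑ x, P2 x z2)) := by
    calc ∑ z1, ∑ z2, ∑ x1, P1 x1 z1 * |B x1 z2|
        ≤ ∑ z1, ∑ z2, Real.sqrt (M1 z1 * ∑ x, P1 x z1)
            * (Real.sqrt ((2:ℝ)^n) * Real.sqrt (M2 z2 * ∑ x, P2 x z2)) :=
          Finset.sum_le_sum fun z1 _ => Finset.sum_le_sum fun z2 _ => hin z1 z2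
      _ = _ := by
          rw [Finset.sum_mul]
          refine Finset.sum_congr rfl fun z1 _ => ?_
          rw [← Finset.mul_sum, ← Finset.mul_sum]
  have hz : ∀ (Z : Type) (_ : Fintype Z) (M mm : Z → ℝ), (∀ z, 0 ≤ M z) → (∀ z, 0 ≤ mm z) →
      ∑ z, Real.sqrt (M z * mm z) ≤ Real.sqrt (∑ z, M z) * Real.sqrt (∑ z, mm z) := by
    intro Z _ M mm hM hmm
    have h := S18.cs (fun z => Real.sqrt (M z)) (fun z => Real.sqrt (mm z))
      (fun z => Real.sqrt_nonneg _) (fun z => Real.sqrt_nonneg _)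
    calc ∑ z, Real.sqrt (M z * mm z)
        = ∑ z, Real.sqrt (M z) * Real.sqrt (mm z) :=
          Finset.sum_congr rfl fun z _ => Real.sqrt_mul (hM z) _
      _ ≤ Real.sqrt (∑ z, Real.sqrt (M z)^2) * Real.sqrt (∑ z, Real.sqrt (mm z)^2) := h
      _ = Real.sqrt (∑ z, M z) * Real.sqrt (∑ z, mm z) := by
          rw [Finset.sum_congr rfl fun z (_ : z ∈ Finset.univ) => Real.sq_sqrt (hM z),
            Finset.sum_congr rfl fun z (_ : z ∈ Finset.univ) => Real.sq_sqrt (hmm z)]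
  have hz1 : ∑ z1, Real.sqrt (M1 z1 * ∑ x, P1 x z1) ≤ Real.sqrt ((2:ℝ)^(-k1:ℝ)) := by
    refine le_trans (hz Z1 inferInstance M1 (fun z => ∑ x, P1 x z) hM1n
      (fun z => Finset.sum_nonneg fun x _ => h1n x z)) ?_
    rw [h1s', Real.sqrt_one, mul_one]
    exact Real.sqrt_le_sqrt hM1s
  have hz2 : ∑ z2, Real.sqrt (M2 z2 * ∑ x, P2 x z2) ≤ Real.sqrt ((2:ℝ)^(-k2:ℝ)) := by
    refine le_trans (hz Z2 inferInstance M2 (fun z => ∑ x, P2 x z) hM2n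
      (fun z => Finset.sum_nonneg fun x _ => h2n x z)) ?_
    rw [h2s', Real.sqrt_one, mul_one]
    exact Real.sqrt_le_sqrt hM2s
  have hb : (∑ z1, Real.sqrt (M1 z1 * ∑ x, P1 x z1))
        * (Real.sqrt ((2:ℝ)^n) * ∑ z2, Real.sqrt (M2 z2 * ∑ x, P2 x z2))
      ≤ Real.sqrt ((2:ℝ)^(-k1:ℝ)) * (Real.sqrt ((2:ℝ)^n) * Real.sqrt ((2:ℝ)^(-k2:ℝ))) := by
    refine mul_le_mul hz1 ?_ (by positivity) (Real.sqrt_nonneg _)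
    exact mul_le_mul_of_nonneg_left hz2 (Real.sqrt_nonneg _)
  have harith : (1/2:ℝ) * (Real.sqrt ((2:ℝ)^(-k1:ℝ)) * (Real.sqrt ((2:ℝ)^n) * Real.sqrt ((2:ℝ)^(-k2:ℝ))))
      ≤ (2:ℝ) ^ (-(1 + k1 + k2 - (n:ℝ))/2) := by
    have e1 : Real.sqrt ((2:ℝ)^(-k1:ℝ)) = (2:ℝ) ^ (-k1 * (1/2)) := by
      rw [Real.sqrt_eq_rpow, ← Real.rpow_mul (by norm_num)]
    have e2 : Real.sqrt ((2:ℝ)^(-k2:ℝ)) = (2:ℝ) ^ (-k2 * (1/2)) := by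
      rw [Real.sqrt_eq_rpow, ← Real.rpow_mul (by norm_num)]
    have e3 : Real.sqrt ((2:ℝ)^n) = (2:ℝ) ^ ((n:ℝ) * (1/2)) := by
      rw [← Real.rpow_natCast 2 n, Real.sqrt_eq_rpow, ← Real.rpow_mul (by norm_num)]
    have e4 : (1/2 : ℝ) = (2:ℝ) ^ (-1 : ℝ) := by
      rw [Real.rpow_neg_one]; norm_num
    rw [e1, e2, e3, e4, ← Real.rpow_add (by norm_num), ← Real.rpow_add (by norm_num),
      ← Real.rpow_add (by norm_num)]
    exact Real.rpow_le_rpow_of_exponent_le one_le_two (by linarith)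
  have hfinal : (1/2:ℝ) * ∑ z1, ∑ z2, ∑ x1, P1 x1 z1 * |B x1 z2|
      ≤ (2:ℝ) ^ (-(1 + k1 + k2 - (n:ℝ))/2) :=
    le_trans (mul_le_mul_of_nonneg_left (hstep.trans hb) (by norm_num)) harith
  refine le_trans (le_of_eq ?_) hfinal
  unfold TV
  congr 1
  refine Eq.trans (Finset.sum_congr rfl fun q _ => habs q.1 q.2.1 q.2.2.1 q.2.2.2) ?_
  calc (∑ q : BS 1 × BS n × Z1 × Z2, (1/2:ℝ) * (P1 q.2.1 q.2.2.1 * |B q.2.1 q.2.2.2|))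
      = ∑ _v : BS 1, ∑ p : BS n × Z1 × Z2, (1/2:ℝ) * (P1 p.1 p.2.1 * |B p.1 p.2.2|) :=
        Fintype.sum_prod_type _
    _ = (Fintype.card (BS 1)) • ∑ p : BS n × Z1 × Z2, (1/2:ℝ) * (P1 p.1 p.2.1 * |B p.1 p.2.2|) := by
        rw [Finset.sum_const, Finset.card_univ]
    _ = 2 • ∑ p : BS n × Z1 × Z2, (1/2:ℝ) * (P1 p.1 p.2.1 * |B p.1 p.2.2|) := by rw [hcard]
    _ = 2 • ((1/2:ℝ) * ∑ p : BS n × Z1 × Z2, P1 p.1 p.2.1 * |B p.1 p.2.2|) := by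
        rw [S18.sum_const_mul]
    _ = ∑ p : BS n × Z1 × Z2, P1 p.1 p.2.1 * |B p.1 p.2.2| := by
        rw [nsmul_eq_mul]; push_cast; ring
    _ = ∑ x1, ∑ r : Z1 × Z2, P1 x1 r.1 * |B x1 r.2| := Fintype.sum_prod_type _
    _ = ∑ x1, ∑ z1, ∑ z2, P1 x1 z1 * |B x1 z2| :=
        Finset.sum_congr rfl fun x1 _ => Fintype.sum_prod_type _
    _ = ∑ z1, ∑ z2, ∑ x1, P1 x1 z1 * |B x1 z2| := hre
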